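/- For every integer n ≥ 1, every z > 0 and every t ∈ ℝ, one has J_0(z) + 2 ∑_{k=1}^∞ e^{-iπkn/2} J_{kn}(z) cos(k t) = (1/n) ∑_{ℓ=0}^{n-1} e^{-i z cos((t + 2πℓ)/n)}, where the series on the left converges absolutely. -/

import Mathlib

open scoped Real

/-- Bessel function of the first kind `J_ν(z)`, defined by its series. -/
noncomputable def besselJ (ν z : ℝ) : ℝ :=
  ∑' j : ℕ, ((-1 : ℝ) ^ j / (j.factorial * Real.Gamma ((j : ℝ) + ν + 1))) *
    (z / 2) ^ (2 * (j : ℝ) + ν)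

lemma besselJ_nat (m : ℕ) (z : ℝ) :
    besselJ m z = ∑' j : ℕ, (-1 : ℝ) ^ j / (j.factorial * (j + m).factorial) * (z / 2) ^ (2 * j + m) := by
  unfold besselJ
  apply tsum_congr
  intro j
  have h1 : Real.Gamma ((j : ℝ) + m + 1) = (j + m).factorial := by
    rw [show (j : ℝ) + m + 1 = ((j + m : ℕ) : ℝ) + 1 by push_cast; ring,
      Real.Gamma_nat_eq_factorial]
  have h2 : (z / 2) ^ (2 * (j : ℝ) + m) = (z / 2) ^ (2 * j + m : ℕ) := by
    rw [show 2 * (j : ℝ) + m = ((2 * j + m : ℕ) : ℝ) by push_cast; ring, Real.rpow_natCast]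
  rw [h1, h2]

lemma aux_norm_real (m : ℕ) (z : ℝ) (j : ℕ) :
    ‖(-1 : ℝ) ^ j / (j.factorial * (j + m).factorial) * (z / 2) ^ (2 * j + m)‖
      = (|z| / 2) ^ (2 * j + m) / ((j.factorial : ℝ) * (j + m).factorial) := by
  have h0 : (0 : ℝ) ≤ (j.factorial : ℝ) * (j + m).factorial := by positivity
  rw [Real.norm_eq_abs, abs_mul, abs_div, _root_.abs_pow, _root_.abs_pow, abs_neg, abs_one,
    one_pow, abs_div, _root_.abs_two, _root_.abs_of_nonneg h0]
  ring

lemma aux_summable (m : ℕ) (z : ℝ) :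
    Summable (fun j : ℕ => (|z| / 2) ^ (2 * j + m) / ((j.factorial : ℝ) * (j + m).factorial)) := by
  have hb : Summable (fun j : ℕ => (|z| / 2) ^ m * (((|z| / 2) ^ 2) ^ j / j.factorial)) :=
    (Real.summable_pow_div_factorial ((|z| / 2) ^ 2)).mul_left _
  apply Summable.of_nonneg_of_le (fun j => by positivity) _ hb
  intro j
  calc (|z| / 2) ^ (2 * j + m) / ((j.factorial : ℝ) * (j + m).factorial)
      ≤ (|z| / 2) ^ (2 * j + m) / (j.factorial : ℝ) := by
        gcongr
        · exact_mod_cast Nat.le_mul_of_pos_right _ (j + m).factorial_pos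
    _ = (|z| / 2) ^ m * (((|z| / 2) ^ 2) ^ j / j.factorial) := by
        rw [← pow_mul, pow_add]
        ring

lemma besselJ_summable (m : ℕ) (z : ℝ) :
    Summable (fun j : ℕ => (-1 : ℝ) ^ j / (j.factorial * (j + m).factorial) * (z / 2) ^ (2 * j + m)) := by
  apply Summable.of_norm
  simpa only [aux_norm_real m z] using aux_summable m z

lemma neg_I_pow_sq (j m : ℕ) : (-Complex.I) ^ (2 * j + m) = (-1) ^ j * (-Complex.I) ^ m := by
  have h2 : (-Complex.I) ^ 2 = -1 := by
    rw [sq, neg_mul_neg, Complex.I_mul_I]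
  rw [pow_add, pow_mul, h2]

lemma exp_neg_pi_mul_I (m : ℕ) :
    Complex.exp ((-(Real.pi * m / 2) : ℝ) * Complex.I) = (-Complex.I) ^ m := by
  rw [show ((-(Real.pi * m / 2) : ℝ) : ℂ) * Complex.I = (m : ℂ) * (((-(Real.pi / 2) : ℝ)) * Complex.I) by
    push_cast; ring, Complex.exp_nat_mul]
  congr 1
  rw [Complex.exp_mul_I]
  push_cast
  simp [Real.cos_pi_div_two, Real.sin_pi_div_two]

lemma aux_norm (m : ℕ) (z : ℝ) (j : ℕ) :
    ‖(-Complex.I * (z : ℂ) / 2) ^ (2 * j + m) / ((j.factorial : ℂ) * ((j + m).factorial : ℂ))‖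
      = (|z| / 2) ^ (2 * j + m) / ((j.factorial : ℝ) * (j + m).factorial) := by
  rw [norm_div, norm_pow]
  congr 1
  · congr 1
    rw [norm_div, norm_mul, norm_neg, Complex.norm_I, one_mul, Complex.norm_real,
      Real.norm_eq_abs, Complex.norm_ofNat]
  · rw [norm_mul]
    simp [Complex.norm_natCast]

lemma besselJ_complex_hasSum (m : ℕ) (z : ℝ) :
    HasSum (fun j : ℕ => (-Complex.I * (z : ℂ) / 2) ^ (2 * j + m) / ((j.factorial : ℂ) * ((j + m).factorial : ℂ)))
      (Complex.exp ((-(Real.pi * m / 2) : ℝ) * Complex.I) * ((besselJ m z : ℝ) : ℂ)) := by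
  set f : ℕ → ℂ := fun j => (-Complex.I * (z : ℂ) / 2) ^ (2 * j + m) / ((j.factorial : ℂ) * ((j + m).factorial : ℂ)) with hf
  have hsum : Summable f := by
    apply Summable.of_norm
    have := aux_summable m z
    simpa only [hf, aux_norm m z] using this
  have hb : ((besselJ m z : ℝ) : ℂ)
      = ∑' j : ℕ, (((-1 : ℝ) ^ j / (j.factorial * (j + m).factorial) * (z / 2) ^ (2 * j + m) : ℝ) : ℂ) := by
    rw [besselJ_nat, Complex.ofReal_tsum]
  have key : ∀ j : ℕ, Complex.exp ((-(Real.pi * m / 2) : ℝ) * Complex.I) *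
      (((-1 : ℝ) ^ j / (j.factorial * (j + m).factorial) * (z / 2) ^ (2 * j + m) : ℝ) : ℂ) = f j := by
    intro j
    rw [exp_neg_pi_mul_I, hf]
    push_cast
    have h1 : (-Complex.I * (z : ℂ) / 2) ^ (2 * j + m)
        = (-1 : ℂ) ^ j * (-Complex.I) ^ m * ((z : ℂ) / 2) ^ (2 * j + m) := by
      rw [show -Complex.I * (z : ℂ) / 2 = (-Complex.I) * ((z : ℂ) / 2) by ring, mul_pow,
        neg_I_pow_sq]
    rw [h1]
    ring
  have : ∑' j, f j = Complex.exp ((-(Real.pi * m / 2) : ℝ) * Complex.I) * ((besselJ m z : ℝ) : ℂ) := by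
    rw [hb, ← tsum_mul_left]
    exact tsum_congr fun j => (key j).symm
  exact this ▸ hsum.hasSum

lemma rootSum (n : ℕ) (hn : 1 ≤ n) (t : ℝ) (m : ℤ) :
    ∑ l ∈ Finset.range n, Complex.exp ((m : ℂ) * (((t + 2 * Real.pi * l) / n : ℝ) : ℂ) * Complex.I)
      = if (n : ℤ) ∣ m then (n : ℂ) * Complex.exp ((m : ℂ) * ((t / n : ℝ) : ℂ) * Complex.I) else 0 := by
  have hn0 : (n : ℂ) ≠ 0 := Nat.cast_ne_zero.mpr (by omega)
  have hn0' : (n : ℝ) ≠ 0 := Nat.cast_ne_zero.mpr (by omega)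
  set r : ℂ := Complex.exp ((m : ℂ) * (2 * Real.pi / n) * Complex.I) with hr
  set e0 : ℂ := Complex.exp ((m : ℂ) * ((t / n : ℝ) : ℂ) * Complex.I) with he0
  have hterm : ∀ l ∈ Finset.range n,
      Complex.exp ((m : ℂ) * (((t + 2 * Real.pi * l) / n : ℝ) : ℂ) * Complex.I) = e0 * r ^ l := by
    intro l _
    rw [hr, he0, ← Complex.exp_nat_mul, ← Complex.exp_add]
    congr 1
    push_cast
    field_simp
  rw [Finset.sum_congr rfl hterm, ← Finset.mul_sum]
  have hrn : r ^ n = 1 := by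
    rw [hr, ← Complex.exp_nat_mul]
    rw [show (n : ℂ) * ((m : ℂ) * (2 * Real.pi / n) * Complex.I) = (m : ℂ) * (2 * Real.pi * Complex.I) by
      field_simp]
    exact Complex.exp_int_mul_two_pi_mul_I m
  by_cases hd : (n : ℤ) ∣ m
  · obtain ⟨d, hdm⟩ := hd
    have hr1 : r = 1 := by
      rw [hr, show ((m : ℂ) * (2 * Real.pi / n) * Complex.I) = (d : ℂ) * (2 * Real.pi * Complex.I) by
        have : (m : ℂ) = (n : ℂ) * d := by exact_mod_cast congrArg (fun x : ℤ => (x : ℂ)) hdm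
        rw [this]; field_simp]
      exact Complex.exp_int_mul_two_pi_mul_I d
    rw [if_pos ⟨d, hdm⟩, hr1]
    simp [mul_comm]
  · have hr1 : r ≠ 1 := by
      intro h
      rw [hr, Complex.exp_eq_one_iff] at h
      obtain ⟨k, hk⟩ := h
      apply hd
      refine ⟨k, ?_⟩
      have hpi : (Real.pi : ℂ) ≠ 0 := Complex.ofReal_ne_zero.mpr Real.pi_ne_zero
      have h2pi : (2 : ℂ) * Real.pi ≠ 0 := by
        simp [hpi]
      have hI : (m : ℂ) * (2 * Real.pi / n) = (k : ℂ) * (2 * Real.pi) :=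
        mul_right_cancel₀ Complex.I_ne_zero (by rw [hk]; ring)
      have : (m : ℂ) = (n : ℂ) * k := by
        field_simp at hI
        have := mul_right_cancel₀ h2pi (by rw [hI] : (m : ℂ) * (2 * Real.pi) = ((n : ℂ) * k) * (2 * Real.pi))
        exact this
      exact_mod_cast this
    rw [if_neg hd, geom_sum_eq hr1, hrn]
    simp

lemma exp_hasSum (a : ℂ) : HasSum (fun p : ℕ => a ^ p / p.factorial) (Complex.exp a) := by
  have h : Summable (fun p : ℕ => a ^ p / p.factorial) := by
    apply Summable.of_norm
    simpa [norm_div, norm_pow] using Real.summable_pow_div_factorial ‖a‖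
  convert h.hasSum
  rw [Complex.exp_eq_exp_ℂ, NormedSpace.exp_eq_tsum_div]

lemma exp_norm_summable (a : ℂ) : Summable fun p : ℕ => ‖a ^ p / p.factorial‖ := by
  simpa [norm_div, norm_pow] using Real.summable_pow_div_factorial ‖a‖

lemma expProd (a b : ℂ) :
    HasSum (fun pq : ℕ × ℕ => a ^ pq.1 / pq.1.factorial * (b ^ pq.2 / pq.2.factorial))
      (Complex.exp a * Complex.exp b) := by
  have hs : Summable (fun pq : ℕ × ℕ => a ^ pq.1 / pq.1.factorial * (b ^ pq.2 / pq.2.factorial)) :=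
    summable_mul_of_summable_norm (f := fun p : ℕ => a ^ p / p.factorial)
      (g := fun q : ℕ => b ^ q / q.factorial) (exp_norm_summable a) (exp_norm_summable b)
  have ht : (∑' p : ℕ, a ^ p / p.factorial) * (∑' q : ℕ, b ^ q / q.factorial)
      = ∑' pq : ℕ × ℕ, a ^ pq.1 / pq.1.factorial * (b ^ pq.2 / pq.2.factorial) :=
    tsum_mul_tsum_of_summable_norm (exp_norm_summable a) (exp_norm_summable b)
  rw [(exp_hasSum a).tsum_eq, (exp_hasSum b).tsum_eq] at ht
  exact ht ▸ hs.hasSum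


noncomputable section

def cZ (z : ℝ) : ℂ := -Complex.I * z / 2

def DD (n : ℕ) (t : ℝ) (m : ℤ) : ℂ :=
  if (n : ℤ) ∣ m then (n : ℂ) * Complex.exp ((m : ℂ) * ((t / n : ℝ) : ℂ) * Complex.I) else 0

def GG (n : ℕ) (z t : ℝ) (pq : ℕ × ℕ) : ℂ :=
  cZ z ^ (pq.1 + pq.2) / ((pq.1.factorial : ℂ) * (pq.2.factorial : ℂ)) * DD n t ((pq.1 : ℤ) - (pq.2 : ℤ))

def EE (n : ℕ) (z : ℝ) (k : ℕ) : ℂ :=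
  Complex.exp ((-(Real.pi * ((k + 1) * n : ℕ) / 2) : ℝ) * Complex.I) *
    ((besselJ ((k + 1) * n : ℕ) z : ℝ) : ℂ)

lemma cZ_norm (z : ℝ) : ‖cZ z‖ = |z| / 2 := by
  rw [cZ, norm_div, norm_mul, norm_neg, Complex.norm_I, one_mul, Complex.norm_real,
    Real.norm_eq_abs, Complex.norm_ofNat]

lemma DD_norm_le (n : ℕ) (t : ℝ) (m : ℤ) : ‖DD n t m‖ ≤ n := by
  rw [DD]
  by_cases h : (n : ℤ) ∣ m
  · rw [if_pos h, norm_mul, Complex.norm_natCast]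
    have harg : (m : ℂ) * ((t / n : ℝ) : ℂ) * Complex.I = (((m : ℝ) * (t / n) : ℝ) : ℂ) * Complex.I := by
      push_cast; ring
    rw [harg, Complex.norm_exp_ofReal_mul_I, mul_one]
  · rw [if_neg h, norm_zero]
    positivity

lemma GG_norm_le (n : ℕ) (z t : ℝ) (pq : ℕ × ℕ) :
    ‖GG n z t pq‖ ≤ (n : ℝ) * (‖cZ z‖ ^ pq.1 / pq.1.factorial * (‖cZ z‖ ^ pq.2 / pq.2.factorial)) := by
  rw [GG, norm_mul]
  calc ‖cZ z ^ (pq.1 + pq.2) / ((pq.1.factorial : ℂ) * (pq.2.factorial : ℂ))‖ * ‖DD n t ((pq.1 : ℤ) - pq.2)‖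
      ≤ ‖cZ z ^ (pq.1 + pq.2) / ((pq.1.factorial : ℂ) * (pq.2.factorial : ℂ))‖ * n := by
        gcongr
        exact DD_norm_le n t _
    _ = (n : ℝ) * (‖cZ z‖ ^ pq.1 / pq.1.factorial * (‖cZ z‖ ^ pq.2 / pq.2.factorial)) := by
        rw [norm_div, norm_pow, norm_mul, Complex.norm_natCast, Complex.norm_natCast, pow_add]
        ring

lemma hasSum_GG_diag (n : ℕ) (hn : 1 ≤ n) (z t : ℝ) :
    HasSum (fun j : ℕ => GG n z t (j, j)) ((n : ℂ) * ((besselJ 0 z : ℝ) : ℂ)) := by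
  have h := (besselJ_complex_hasSum 0 z).mul_left (n : ℂ)
  have hexp : Complex.exp ((-(Real.pi * (0 : ℕ) / 2) : ℝ) * Complex.I) = 1 := by
    norm_num
  rw [hexp, one_mul] at h
  have hfun : (fun j : ℕ => GG n z t (j, j))
      = fun j : ℕ => (n : ℂ) * ((-Complex.I * (z : ℂ) / 2) ^ (2 * j + 0) / ((j.factorial : ℂ) * ((j + 0).factorial : ℂ))) := by
    funext j
    rw [GG, DD]
    have hd : (n : ℤ) ∣ ((j : ℤ) - (j : ℤ)) := by simp
    rw [if_pos hd]
    simp only [sub_self, Int.cast_zero, zero_mul, Complex.exp_zero, mul_one]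
    rw [cZ]
    norm_num [two_mul]
    ring
  rw [hfun]
  rw [Nat.cast_zero] at h
  exact h

lemma hasSum_GG_row_pos (n : ℕ) (hn : 1 ≤ n) (z t : ℝ) (k : ℕ) :
    HasSum (fun j : ℕ => GG n z t (j + (k + 1) * n, j))
      ((n : ℂ) * (Complex.exp (((((k : ℝ) + 1) * t : ℝ) : ℂ) * Complex.I) * EE n z k)) := by
  have hn0 : (n : ℝ) ≠ 0 := Nat.cast_ne_zero.mpr (by omega)
  have h := (besselJ_complex_hasSum ((k + 1) * n) z).mul_left
    ((n : ℂ) * Complex.exp (((((k : ℝ) + 1) * t : ℝ) : ℂ) * Complex.I))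
  have hfun : (fun j : ℕ => GG n z t (j + (k + 1) * n, j))
      = fun j : ℕ => (n : ℂ) * Complex.exp (((((k : ℝ) + 1) * t : ℝ) : ℂ) * Complex.I) *
          ((-Complex.I * (z : ℂ) / 2) ^ (2 * j + (k + 1) * n) /
            ((j.factorial : ℂ) * ((j + (k + 1) * n).factorial : ℂ))) := by
    funext j
    rw [GG, DD]
    have harg : ((j + (k + 1) * n : ℕ) : ℤ) - (j : ℤ) = ((k + 1) * n : ℕ) := by push_cast; ring
    rw [harg]
    have hd : (n : ℤ) ∣ (((k + 1) * n : ℕ) : ℤ) := ⟨(k : ℤ) + 1, by push_cast; ring⟩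
    rw [if_pos hd]
    have hexparg : ((((k + 1) * n : ℕ) : ℤ) : ℂ) * ((t / n : ℝ) : ℂ) * Complex.I
        = ((((k : ℝ) + 1) * t : ℝ) : ℂ) * Complex.I := by
      have hn0c : (n : ℂ) ≠ 0 := Nat.cast_ne_zero.mpr (by omega)
      push_cast
      field_simp
    rw [hexparg]
    rw [cZ, show (j + (k + 1) * n) + j = 2 * j + (k + 1) * n by ring]
    ring
  rw [hfun, EE]
  convert h using 1
  · rfl
  ring

lemma hasSum_GG_row_neg (n : ℕ) (hn : 1 ≤ n) (z t : ℝ) (k : ℕ) :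
    HasSum (fun j : ℕ => GG n z t (j, j + (k + 1) * n))
      ((n : ℂ) * (Complex.exp (((-(((k : ℝ) + 1) * t) : ℝ) : ℂ) * Complex.I) * EE n z k)) := by
  have hn0 : (n : ℝ) ≠ 0 := Nat.cast_ne_zero.mpr (by omega)
  have h := (besselJ_complex_hasSum ((k + 1) * n) z).mul_left
    ((n : ℂ) * Complex.exp (((-(((k : ℝ) + 1) * t) : ℝ) : ℂ) * Complex.I))
  have hfun : (fun j : ℕ => GG n z t (j, j + (k + 1) * n))
      = fun j : ℕ => (n : ℂ) * Complex.exp (((-(((k : ℝ) + 1) * t) : ℝ) : ℂ) * Complex.I) *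
          ((-Complex.I * (z : ℂ) / 2) ^ (2 * j + (k + 1) * n) /
            ((j.factorial : ℂ) * ((j + (k + 1) * n).factorial : ℂ))) := by
    funext j
    rw [GG, DD]
    have harg : ((j : ℤ)) - ((j + (k + 1) * n : ℕ) : ℤ) = -(((k + 1) * n : ℕ) : ℤ) := by
      push_cast; ring
    rw [harg]
    have hd : (n : ℤ) ∣ -(((k + 1) * n : ℕ) : ℤ) := ⟨-((k : ℤ) + 1), by push_cast; ring⟩
    rw [if_pos hd]
    have hexparg : (((-(((k + 1) * n : ℕ) : ℤ) : ℤ)) : ℂ) * ((t / n : ℝ) : ℂ) * Complex.I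
        = ((-(((k : ℝ) + 1) * t) : ℝ) : ℂ) * Complex.I := by
      have hn0c : (n : ℂ) ≠ 0 := Nat.cast_ne_zero.mpr (by omega)
      push_cast
      field_simp
    rw [hexparg]
    rw [cZ, show j + (j + (k + 1) * n) = 2 * j + (k + 1) * n by ring]
    ring
  rw [hfun, EE]
  convert h using 1
  · rfl
  ring

def iotaP (n : ℕ) (kj : ℕ × ℕ) : ℕ × ℕ := (kj.2 + (kj.1 + 1) * n, kj.2)
def iotaM (n : ℕ) (kj : ℕ × ℕ) : ℕ × ℕ := (kj.2, kj.2 + (kj.1 + 1) * n)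

lemma iotaP_inj (n : ℕ) (hn : 1 ≤ n) : Function.Injective (iotaP n) := by
  rintro ⟨k, j⟩ ⟨k', j'⟩ h
  simp only [iotaP, Prod.mk.injEq] at h
  obtain ⟨h1, h2⟩ := h
  subst h2
  have : (k + 1) * n = (k' + 1) * n := by omega
  have : k + 1 = k' + 1 := Nat.eq_of_mul_eq_mul_right (by omega) this
  simp [Prod.ext_iff]
  omega

lemma iotaM_inj (n : ℕ) (hn : 1 ≤ n) : Function.Injective (iotaM n) := by
  rintro ⟨k, j⟩ ⟨k', j'⟩ h
  simp only [iotaM, Prod.mk.injEq] at h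
  obtain ⟨h2, h1⟩ := h
  subst h2
  have : (k + 1) * n = (k' + 1) * n := by omega
  have : k + 1 = k' + 1 := Nat.eq_of_mul_eq_mul_right (by omega) this
  simp [Prod.ext_iff]
  omega

def uu (n : ℕ) (z t : ℝ) (pq : ℕ × ℕ) : ℂ := if pq.2 < pq.1 then GG n z t pq else 0
def vv (n : ℕ) (z t : ℝ) (pq : ℕ × ℕ) : ℂ := if pq.1 < pq.2 then GG n z t pq else 0
def dd (n : ℕ) (z t : ℝ) (pq : ℕ × ℕ) : ℂ := if pq.1 = pq.2 then GG n z t pq else 0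

lemma uu_support (n : ℕ) (hn : 1 ≤ n) (z t : ℝ) :
    ∀ pq ∉ Set.range (iotaP n), uu n z t pq = 0 := by
  rintro ⟨p, q⟩ hpq
  by_cases hlt : q < p
  swap
  · simp [uu, hlt]
  rw [uu, if_pos hlt]
  by_cases hdvd : (n : ℤ) ∣ ((p : ℤ) - (q : ℤ))
  · exfalso
    apply hpq
    obtain ⟨s, hs⟩ := hdvd
    have hpos : (0 : ℤ) < (n : ℤ) * s := by
      rw [← hs]
      have : (q : ℤ) < (p : ℤ) := by exact_mod_cast hlt
      omega
    have hspos : 0 < s := by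
      by_contra h
      push_neg at h
      have : (n : ℤ) * s ≤ 0 := mul_nonpos_iff.mpr (Or.inl ⟨by positivity, h⟩)
      omega
    refine ⟨((s - 1).toNat, q), ?_⟩
    have hk : (((s - 1).toNat : ℤ)) = s - 1 := Int.toNat_of_nonneg (by omega)
    have h2 : ((q + ((s - 1).toNat + 1) * n : ℕ) : ℤ) = (p : ℤ) := by
      push_cast [hk]
      linear_combination -hs
    have h3 : q + ((s - 1).toNat + 1) * n = p := by exact_mod_cast h2
    rw [iotaP]
    exact Prod.ext h3 rfl
  · simp [GG, DD, hdvd]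

lemma vv_support (n : ℕ) (hn : 1 ≤ n) (z t : ℝ) :
    ∀ pq ∉ Set.range (iotaM n), vv n z t pq = 0 := by
  rintro ⟨p, q⟩ hpq
  by_cases hlt : p < q
  swap
  · simp [vv, hlt]
  rw [vv, if_pos hlt]
  by_cases hdvd : (n : ℤ) ∣ ((p : ℤ) - (q : ℤ))
  · exfalso
    apply hpq
    obtain ⟨s, hs⟩ := hdvd
    have hpos : (0 : ℤ) < (n : ℤ) * (-s) := by
      have : (p : ℤ) < (q : ℤ) := by exact_mod_cast hlt
      have h' : (q : ℤ) - (p : ℤ) = (n : ℤ) * (-s) := by linear_combination -hs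
      omega
    have hspos : 0 < -s := by
      by_contra h
      push_neg at h
      have : (n : ℤ) * (-s) ≤ 0 := mul_nonpos_iff.mpr (Or.inl ⟨by positivity, h⟩)
      omega
    refine ⟨((-s - 1).toNat, p), ?_⟩
    have hk : (((-s - 1).toNat : ℤ)) = -s - 1 := Int.toNat_of_nonneg (by omega)
    have h2 : ((p + ((-s - 1).toNat + 1) * n : ℕ) : ℤ) = (q : ℤ) := by
      push_cast [hk]
      linear_combination hs
    have h3 : p + ((-s - 1).toNat + 1) * n = q := by exact_mod_cast h2
    rw [iotaM]
    exact Prod.ext rfl h3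
  · simp [GG, DD, hdvd]

lemma dd_support (n : ℕ) (z t : ℝ) :
    ∀ pq ∉ Set.range (fun j : ℕ => ((j, j) : ℕ × ℕ)), dd n z t pq = 0 := by
  rintro ⟨p, q⟩ hpq
  have : p ≠ q := by
    intro h
    exact hpq ⟨p, by simp [h]⟩
  simp [dd, this]

lemma NN_summable (z : ℝ) :
    Summable (fun pq : ℕ × ℕ => ‖cZ z‖ ^ pq.1 / pq.1.factorial * (‖cZ z‖ ^ pq.2 / pq.2.factorial)) :=
  Summable.mul_of_nonneg (f := fun p : ℕ => ‖cZ z‖ ^ p / p.factorial)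
    (g := fun q : ℕ => ‖cZ z‖ ^ q / q.factorial)
    (Real.summable_pow_div_factorial _) (Real.summable_pow_div_factorial _)
    (fun p => by positivity) (fun q => by positivity)

lemma BB_summable (n : ℕ) (z : ℝ) :
    Summable (fun pq : ℕ × ℕ =>
      (n : ℝ) * (‖cZ z‖ ^ pq.1 / pq.1.factorial * (‖cZ z‖ ^ pq.2 / pq.2.factorial))) :=
  (NN_summable z).mul_left _

lemma uu_norm_le (n : ℕ) (z t : ℝ) (pq : ℕ × ℕ) :
    ‖uu n z t pq‖ ≤ (n : ℝ) * (‖cZ z‖ ^ pq.1 / pq.1.factorial * (‖cZ z‖ ^ pq.2 / pq.2.factorial)) := by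
  rw [uu]
  by_cases h : pq.2 < pq.1
  · rw [if_pos h]; exact GG_norm_le n z t pq
  · rw [if_neg h, norm_zero]; positivity

lemma vv_norm_le (n : ℕ) (z t : ℝ) (pq : ℕ × ℕ) :
    ‖vv n z t pq‖ ≤ (n : ℝ) * (‖cZ z‖ ^ pq.1 / pq.1.factorial * (‖cZ z‖ ^ pq.2 / pq.2.factorial)) := by
  rw [vv]
  by_cases h : pq.1 < pq.2
  · rw [if_pos h]; exact GG_norm_le n z t pq
  · rw [if_neg h, norm_zero]; positivity

lemma uu_comp_summable (n : ℕ) (hn : 1 ≤ n) (z t : ℝ) :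
    Summable (fun kj : ℕ × ℕ => uu n z t (iotaP n kj)) := by
  apply Summable.of_norm_bounded ((BB_summable n z).comp_injective (iotaP_inj n hn))
  exact fun kj => uu_norm_le n z t (iotaP n kj)

lemma vv_comp_summable (n : ℕ) (hn : 1 ≤ n) (z t : ℝ) :
    Summable (fun kj : ℕ × ℕ => vv n z t (iotaM n kj)) := by
  apply Summable.of_norm_bounded ((BB_summable n z).comp_injective (iotaM_inj n hn))
  exact fun kj => vv_norm_le n z t (iotaM n kj)

lemma uu_fiber (n : ℕ) (hn : 1 ≤ n) (z t : ℝ) (k : ℕ) :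
    HasSum (fun j : ℕ => uu n z t (iotaP n (k, j)))
      ((n : ℂ) * (Complex.exp (((((k : ℝ) + 1) * t : ℝ) : ℂ) * Complex.I) * EE n z k)) := by
  have h := hasSum_GG_row_pos n hn z t k
  have heq : (fun j : ℕ => uu n z t (iotaP n (k, j))) = fun j : ℕ => GG n z t (j + (k + 1) * n, j) := by
    funext j
    rw [iotaP, uu, if_pos]
    have : 1 ≤ (k + 1) * n := by
      calc 1 = 1 * 1 := by ring
        _ ≤ (k + 1) * n := Nat.mul_le_mul (by omega) hn
    simp only
    omega
  rw [heq]
  exact h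

lemma vv_fiber (n : ℕ) (hn : 1 ≤ n) (z t : ℝ) (k : ℕ) :
    HasSum (fun j : ℕ => vv n z t (iotaM n (k, j)))
      ((n : ℂ) * (Complex.exp (((-(((k : ℝ) + 1) * t) : ℝ) : ℂ) * Complex.I) * EE n z k)) := by
  have h := hasSum_GG_row_neg n hn z t k
  have heq : (fun j : ℕ => vv n z t (iotaM n (k, j))) = fun j : ℕ => GG n z t (j, j + (k + 1) * n) := by
    funext j
    rw [iotaM, vv, if_pos]
    have : 1 ≤ (k + 1) * n := by
      calc 1 = 1 * 1 := by ring
        _ ≤ (k + 1) * n := Nat.mul_le_mul (by omega) hn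
    simp only
    omega
  rw [heq]
  exact h

lemma dd_fiber (n : ℕ) (hn : 1 ≤ n) (z t : ℝ) :
    HasSum (fun j : ℕ => dd n z t (j, j)) ((n : ℂ) * ((besselJ 0 z : ℝ) : ℂ)) := by
  have h := hasSum_GG_diag n hn z t
  have heq : (fun j : ℕ => dd n z t (j, j)) = fun j : ℕ => GG n z t (j, j) := by
    funext j
    rw [dd, if_pos rfl]
  rw [heq]
  exact h

lemma GG_split (n : ℕ) (z t : ℝ) (pq : ℕ × ℕ) :
    GG n z t pq = dd n z t pq + uu n z t pq + vv n z t pq := by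
  rcases Nat.lt_trichotomy pq.1 pq.2 with h | h | h
  · rw [dd, uu, vv, if_neg (by omega), if_neg (by omega), if_pos h]
    ring
  · rw [dd, uu, vv, if_pos h, if_neg (by omega), if_neg (by omega)]
    ring
  · rw [dd, uu, vv, if_neg (by omega), if_pos h, if_neg (by omega)]
    ring

lemma GG_hasSum (n : ℕ) (hn : 1 ≤ n) (z t : ℝ) :
    HasSum (GG n z t)
      ((n : ℂ) * ((besselJ 0 z : ℝ) : ℂ) + ∑' kj : ℕ × ℕ, uu n z t (iotaP n kj)
        + ∑' kj : ℕ × ℕ, vv n z t (iotaM n kj)) := by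
  have hd : HasSum (dd n z t) ((n : ℂ) * ((besselJ 0 z : ℝ) : ℂ)) := by
    refine ((Function.Injective.hasSum_iff ?_ (dd_support n z t)).mp (dd_fiber n hn z t))
    intro a b h
    simpa using congrArg Prod.fst h
  have hu : HasSum (uu n z t) (∑' kj : ℕ × ℕ, uu n z t (iotaP n kj)) :=
    (Function.Injective.hasSum_iff (iotaP_inj n hn) (uu_support n hn z t)).mp
      (uu_comp_summable n hn z t).hasSum
  have hv : HasSum (vv n z t) (∑' kj : ℕ × ℕ, vv n z t (iotaM n kj)) :=
    (Function.Injective.hasSum_iff (iotaM_inj n hn) (vv_support n hn z t)).mp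
      (vv_comp_summable n hn z t).hasSum
  have h := (hd.add hu).add hv
  have heq : (fun pq => dd n z t pq + uu n z t pq + vv n z t pq) = GG n z t :=
    funext fun pq => (GG_split n z t pq).symm
  rwa [heq] at h

lemma sum_exp_eq (n : ℕ) (hn : 1 ≤ n) (z t : ℝ) :
    ∑ l ∈ Finset.range n, Complex.exp
        (-((z * Real.cos ((t + 2 * Real.pi * (l : ℝ)) / (n : ℝ)) : ℝ) : ℂ) * Complex.I)
      = ∑' pq : ℕ × ℕ, GG n z t pq := by
  have hexp_l : ∀ l : ℕ, Complex.exp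
      (-((z * Real.cos ((t + 2 * Real.pi * (l : ℝ)) / (n : ℝ)) : ℝ) : ℂ) * Complex.I)
      = Complex.exp (cZ z * Complex.exp ((((t + 2 * Real.pi * (l : ℝ)) / (n : ℝ) : ℝ) : ℂ) * Complex.I))
        * Complex.exp (cZ z * Complex.exp (-(((t + 2 * Real.pi * (l : ℝ)) / (n : ℝ) : ℝ) : ℂ) * Complex.I)) := by
    intro l
    rw [← Complex.exp_add]
    congr 1
    rw [Complex.ofReal_mul, Complex.ofReal_cos]
    have h2 := Complex.two_cos (x := (((t + 2 * Real.pi * (l : ℝ)) / (n : ℝ) : ℝ) : ℂ))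
    rw [cZ]
    linear_combination (-Complex.I * (z : ℂ) / 2) * h2
  have hF : ∀ (l : ℕ) (pq : ℕ × ℕ),
      (cZ z * Complex.exp ((((t + 2 * Real.pi * (l : ℝ)) / (n : ℝ) : ℝ) : ℂ) * Complex.I)) ^ pq.1 / pq.1.factorial
        * ((cZ z * Complex.exp (-(((t + 2 * Real.pi * (l : ℝ)) / (n : ℝ) : ℝ) : ℂ) * Complex.I)) ^ pq.2 / pq.2.factorial)
      = cZ z ^ (pq.1 + pq.2) / ((pq.1.factorial : ℂ) * (pq.2.factorial : ℂ))
        * Complex.exp (((((pq.1 : ℤ) - (pq.2 : ℤ) : ℤ)) : ℂ)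
            * (((t + 2 * Real.pi * (l : ℝ)) / (n : ℝ) : ℝ) : ℂ) * Complex.I) := by
    intro l pq
    have h1 : ((((pq.1 : ℤ) - (pq.2 : ℤ) : ℤ)) : ℂ)
          * (((t + 2 * Real.pi * (l : ℝ)) / (n : ℝ) : ℝ) : ℂ) * Complex.I
        = (pq.1 : ℂ) * ((((t + 2 * Real.pi * (l : ℝ)) / (n : ℝ) : ℝ) : ℂ) * Complex.I)
          + (pq.2 : ℂ) * (-(((t + 2 * Real.pi * (l : ℝ)) / (n : ℝ) : ℝ) : ℂ) * Complex.I) := by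
      push_cast
      ring
    rw [h1, Complex.exp_add, Complex.exp_nat_mul, Complex.exp_nat_mul, mul_pow, mul_pow, pow_add]
    ring
  calc ∑ l ∈ Finset.range n, Complex.exp
        (-((z * Real.cos ((t + 2 * Real.pi * (l : ℝ)) / (n : ℝ)) : ℝ) : ℂ) * Complex.I)
      = ∑ l ∈ Finset.range n, ∑' pq : ℕ × ℕ,
          (cZ z * Complex.exp ((((t + 2 * Real.pi * (l : ℝ)) / (n : ℝ) : ℝ) : ℂ) * Complex.I)) ^ pq.1 / pq.1.factorial
            * ((cZ z * Complex.exp (-(((t + 2 * Real.pi * (l : ℝ)) / (n : ℝ) : ℝ) : ℂ) * Complex.I)) ^ pq.2 / pq.2.factorial) := by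
        refine Finset.sum_congr rfl fun l _ => ?_
        rw [hexp_l l, ← (expProd _ _).tsum_eq]
    _ = ∑' pq : ℕ × ℕ, ∑ l ∈ Finset.range n,
          (cZ z * Complex.exp ((((t + 2 * Real.pi * (l : ℝ)) / (n : ℝ) : ℝ) : ℂ) * Complex.I)) ^ pq.1 / pq.1.factorial
            * ((cZ z * Complex.exp (-(((t + 2 * Real.pi * (l : ℝ)) / (n : ℝ) : ℝ) : ℂ) * Complex.I)) ^ pq.2 / pq.2.factorial) := by
        rw [Summable.tsum_finsetSum]
        exact fun l _ => (expProd _ _).summable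
    _ = ∑' pq : ℕ × ℕ, GG n z t pq := by
        refine tsum_congr fun pq => ?_
        rw [Finset.sum_congr rfl fun l _ => hF l pq, ← Finset.mul_sum]
        rw [rootSum n hn t ((pq.1 : ℤ) - (pq.2 : ℤ))]
        rw [GG, DD]

noncomputable def SS (n : ℕ) (z : ℝ) (k : ℕ) : ℝ :=
  ∑' j : ℕ, (|z| / 2) ^ (2 * j + (k + 1) * n) / ((j.factorial : ℝ) * (j + (k + 1) * n).factorial)


lemma SS_summable (n : ℕ) (hn : 1 ≤ n) (z : ℝ) : Summable (SS n z) := by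
  have hH : Summable (fun kj : ℕ × ℕ =>
      (|z| / 2) ^ (2 * kj.2 + (kj.1 + 1) * n) / ((kj.2.factorial : ℝ) * (kj.2 + (kj.1 + 1) * n).factorial)) := by
    apply Summable.congr ((NN_summable z).comp_injective (iotaP_inj n hn))
    intro kj
    show ‖cZ z‖ ^ (iotaP n kj).1 / (iotaP n kj).1.factorial
        * (‖cZ z‖ ^ (iotaP n kj).2 / (iotaP n kj).2.factorial) = _
    rw [iotaP, cZ_norm]
    simp only
    rw [show 2 * kj.2 + (kj.1 + 1) * n = (kj.2 + (kj.1 + 1) * n) + kj.2 by ring, pow_add]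
    ring
  have fib : ∀ k : ℕ, HasSum (fun j : ℕ =>
      (|z| / 2) ^ (2 * j + (k + 1) * n) / ((j.factorial : ℝ) * (j + (k + 1) * n).factorial))
      (SS n z k) := fun k => (aux_summable ((k + 1) * n) z).hasSum
  exact (hH.hasSum.prod_fiberwise fib).summable

lemma EE_norm_le (n : ℕ) (z : ℝ) (k : ℕ) : ‖EE n z k‖ ≤ SS n z k := by
  rw [EE, norm_mul, Complex.norm_exp_ofReal_mul_I, one_mul, Complex.norm_real, Real.norm_eq_abs]
  rw [besselJ_nat ((k + 1) * n) z]
  calc |∑' j : ℕ, (-1 : ℝ) ^ j / (j.factorial * (j + (k + 1) * n).factorial) * (z / 2) ^ (2 * j + (k + 1) * n)|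
      ≤ ∑' j : ℕ, ‖(-1 : ℝ) ^ j / (j.factorial * (j + (k + 1) * n).factorial) * (z / 2) ^ (2 * j + (k + 1) * n)‖ := by
        rw [← Real.norm_eq_abs]
        exact norm_tsum_le_tsum_norm
          (by simpa only [aux_norm_real ((k + 1) * n) z] using aux_summable ((k + 1) * n) z)
    _ = SS n z k := tsum_congr (aux_norm_real ((k + 1) * n) z)

/-- Closed formula for the series `J_0(z) + 2 ∑_{k≥1} e^{-iπkn/2} J_{kn}(z) cos(kt)`,
together with its absolute convergence. -/
theorem closed_formula_dimension_two_series (n : ℕ) (hn : 1 ≤ n) (z : ℝ) (hz : 0 < z) (t : ℝ) :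
    Summable (fun k : ℕ =>
      ‖Complex.exp (-(Real.pi * ((k : ℝ) + 1) * (n : ℝ) / 2) * Complex.I) *
        ((besselJ (((k : ℝ) + 1) * (n : ℝ)) z : ℝ) : ℂ) *
        ((Real.cos (((k : ℝ) + 1) * t) : ℝ) : ℂ)‖) ∧
    ((besselJ 0 z : ℝ) : ℂ) +
      2 * ∑' k : ℕ, Complex.exp (-(Real.pi * ((k : ℝ) + 1) * (n : ℝ) / 2) * Complex.I) *
        ((besselJ (((k : ℝ) + 1) * (n : ℝ)) z : ℝ) : ℂ) *
        ((Real.cos (((k : ℝ) + 1) * t) : ℝ) : ℂ) =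
      (1 / (n : ℂ)) * ∑ l ∈ Finset.range n,
        Complex.exp (-((z * Real.cos ((t + 2 * Real.pi * (l : ℝ)) / (n : ℝ)) : ℝ) : ℂ) * Complex.I) := by
  have hn0c : (n : ℂ) ≠ 0 := Nat.cast_ne_zero.mpr (by omega)
  have htermf : ∀ k : ℕ, Complex.exp (-(Real.pi * ((k : ℝ) + 1) * (n : ℝ) / 2) * Complex.I) *
        ((besselJ (((k : ℝ) + 1) * (n : ℝ)) z : ℝ) : ℂ) * ((Real.cos (((k : ℝ) + 1) * t) : ℝ) : ℂ)
      = EE n z k * ((Real.cos (((k : ℝ) + 1) * t) : ℝ) : ℂ) := by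
    intro k
    rw [EE]
    have hA : Complex.exp (-(Real.pi * ((k : ℝ) + 1) * (n : ℝ) / 2) * Complex.I)
        = Complex.exp ((-(Real.pi * (((k + 1) * n : ℕ) : ℝ) / 2) : ℝ) * Complex.I) := by
      congr 1
      push_cast
      ring
    have hB : besselJ (((k : ℝ) + 1) * (n : ℝ)) z = besselJ (((k + 1) * n : ℕ) : ℝ) z := by
      congr 1
      push_cast
      ring
    rw [hA, hB]
  have hcos2 : ∀ k : ℕ, Complex.exp (((((k : ℝ) + 1) * t : ℝ) : ℂ) * Complex.I)
        + Complex.exp (((-(((k : ℝ) + 1) * t) : ℝ) : ℂ) * Complex.I)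
      = 2 * ((Real.cos (((k : ℝ) + 1) * t) : ℝ) : ℂ) := by
    intro k
    rw [Complex.ofReal_cos, Complex.two_cos, Complex.ofReal_neg]
  have hufib_total : HasSum (fun k : ℕ => (n : ℂ) *
        (Complex.exp (((((k : ℝ) + 1) * t : ℝ) : ℂ) * Complex.I) * EE n z k))
      (∑' kj : ℕ × ℕ, uu n z t (iotaP n kj)) :=
    (uu_comp_summable n hn z t).hasSum.prod_fiberwise (uu_fiber n hn z t)
  have hvfib_total : HasSum (fun k : ℕ => (n : ℂ) *
        (Complex.exp (((-(((k : ℝ) + 1) * t) : ℝ) : ℂ) * Complex.I) * EE n z k))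
      (∑' kj : ℕ × ℕ, vv n z t (iotaM n kj)) :=
    (vv_comp_summable n hn z t).hasSum.prod_fiberwise (vv_fiber n hn z t)
  have hplus : HasSum (fun k : ℕ => Complex.exp (((((k : ℝ) + 1) * t : ℝ) : ℂ) * Complex.I) * EE n z k)
      ((∑' kj : ℕ × ℕ, uu n z t (iotaP n kj)) / n) := by
    have h := hufib_total.div_const (n : ℂ)
    have heq : (fun k : ℕ => (n : ℂ) *
          (Complex.exp (((((k : ℝ) + 1) * t : ℝ) : ℂ) * Complex.I) * EE n z k) / n)
        = fun k : ℕ => Complex.exp (((((k : ℝ) + 1) * t : ℝ) : ℂ) * Complex.I) * EE n z k :=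
      funext fun k => mul_div_cancel_left₀ _ hn0c
    rwa [heq] at h
  have hminus : HasSum (fun k : ℕ => Complex.exp (((-(((k : ℝ) + 1) * t) : ℝ) : ℂ) * Complex.I) * EE n z k)
      ((∑' kj : ℕ × ℕ, vv n z t (iotaM n kj)) / n) := by
    have h := hvfib_total.div_const (n : ℂ)
    have heq : (fun k : ℕ => (n : ℂ) *
          (Complex.exp (((-(((k : ℝ) + 1) * t) : ℝ) : ℂ) * Complex.I) * EE n z k) / n)
        = fun k : ℕ => Complex.exp (((-(((k : ℝ) + 1) * t) : ℝ) : ℂ) * Complex.I) * EE n z k :=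
      funext fun k => mul_div_cancel_left₀ _ hn0c
    rwa [heq] at h
  have hsum2 : HasSum (fun k : ℕ => EE n z k * ((Real.cos (((k : ℝ) + 1) * t) : ℝ) : ℂ))
      (((∑' kj : ℕ × ℕ, uu n z t (iotaP n kj)) / n + (∑' kj : ℕ × ℕ, vv n z t (iotaM n kj)) / n) / 2) := by
    have h := hplus.add hminus
    have heq : (fun k : ℕ => Complex.exp (((((k : ℝ) + 1) * t : ℝ) : ℂ) * Complex.I) * EE n z k
          + Complex.exp (((-(((k : ℝ) + 1) * t) : ℝ) : ℂ) * Complex.I) * EE n z k)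
        = fun k : ℕ => EE n z k * ((Real.cos (((k : ℝ) + 1) * t) : ℝ) : ℂ) * 2 :=
      funext fun k => by linear_combination (EE n z k) * hcos2 k
    rw [heq] at h
    have h2 := h.div_const 2
    have heq2 : (fun k : ℕ => EE n z k * ((Real.cos (((k : ℝ) + 1) * t) : ℝ) : ℂ) * 2 / 2)
        = fun k : ℕ => EE n z k * ((Real.cos (((k : ℝ) + 1) * t) : ℝ) : ℂ) :=
      funext fun k => by field_simp
    rwa [heq2] at h2
  constructor
  · apply Summable.of_nonneg_of_le (fun k => norm_nonneg _) _ (SS_summable n hn z)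
    intro k
    rw [htermf k]
    calc ‖EE n z k * ((Real.cos (((k : ℝ) + 1) * t) : ℝ) : ℂ)‖
        = ‖EE n z k‖ * ‖((Real.cos (((k : ℝ) + 1) * t) : ℝ) : ℂ)‖ := norm_mul _ _
      _ ≤ SS n z k * 1 := by
          have h1 : ‖((Real.cos (((k : ℝ) + 1) * t) : ℝ) : ℂ)‖ ≤ 1 := by
            rw [Complex.norm_real, Real.norm_eq_abs]
            exact Real.abs_cos_le_one _
          have h2 : (0 : ℝ) ≤ SS n z k := le_trans (norm_nonneg _) (EE_norm_le n z k)
          exact mul_le_mul (EE_norm_le n z k) h1 (norm_nonneg _) h2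
      _ = SS n z k := mul_one _
  · have heqf : (fun k : ℕ => Complex.exp (-(Real.pi * ((k : ℝ) + 1) * (n : ℝ) / 2) * Complex.I) *
          ((besselJ (((k : ℝ) + 1) * (n : ℝ)) z : ℝ) : ℂ) * ((Real.cos (((k : ℝ) + 1) * t) : ℝ) : ℂ))
        = fun k : ℕ => EE n z k * ((Real.cos (((k : ℝ) + 1) * t) : ℝ) : ℂ) := funext htermf
    rw [show (∑' k : ℕ, Complex.exp (-(Real.pi * ((k : ℝ) + 1) * (n : ℝ) / 2) * Complex.I) *
          ((besselJ (((k : ℝ) + 1) * (n : ℝ)) z : ℝ) : ℂ) * ((Real.cos (((k : ℝ) + 1) * t) : ℝ) : ℂ))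
        = ((∑' kj : ℕ × ℕ, uu n z t (iotaP n kj)) / n + (∑' kj : ℕ × ℕ, vv n z t (iotaM n kj)) / n) / 2
      from by rw [heqf]; exact hsum2.tsum_eq]
    rw [sum_exp_eq n hn z t, (GG_hasSum n hn z t).tsum_eq]
    field_simp
    ring

end
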